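/- Let X_d : [0,T] → V be a solution (in a real inner product space V) of Ẋ_d(t) = c_d(λ(t) n(t) − λ(t) κ_d X_d(t)) where λ(t) ≥ 0, ‖n(t)‖ ≤ 1, c_d ≥ 0, κ_d > 0. If ‖X_d(0)‖ ≤ 1/κ_d, then ‖X_d(t)‖ ≤ 1/κ_d for all t ∈ [0,T]. -/

import Mathlib

open Set

theorem backstress_bound {V : Type*} [NormedAddCommGroup V] [InnerProductSpace ℝ V]
    [FiniteDimensional ℝ V]
    (T : ℝ) (hT : 0 ≤ T) (Xd : ℝ → V)
    (l : ℝ → ℝ) (nv : ℝ → V) (cd kd : ℝ) (hcd : 0 ≤ cd) (hkd : 0 < kd)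
    (hl : ∀ t ∈ Set.Icc 0 T, 0 ≤ l t)
    (hn : ∀ t ∈ Set.Icc 0 T, ‖nv t‖ ≤ 1)
    (hderiv : ∀ t ∈ Set.Icc 0 T,
      HasDerivAt Xd (cd • (l t • nv t - (l t * kd) • Xd t)) t)
    (h0 : ‖Xd 0‖ ≤ 1 / kd) :
    ∀ t ∈ Set.Icc 0 T, ‖Xd t‖ ≤ 1 / kd := by
  set c : ℝ := 1 / kd ^ 2 with hc
  set g : ℝ → ℝ := fun t => ‖Xd t‖ ^ 2 with hg
  set g' : ℝ → ℝ := fun t =>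
    2 * inner ℝ (Xd t) (cd • (l t • nv t - (l t * kd) • Xd t)) with hg'
  have hgderiv : ∀ t ∈ Set.Icc 0 T, HasDerivAt g (g' t) t := by
    intro t ht
    have h := (hderiv t ht).norm_sq
    simpa [hg, hg'] using h
  have hk1 : kd * (1 / kd) = 1 := mul_one_div_cancel hkd.ne'
  have hkc : kd * c = 1 / kd := by
    rw [hc]; field_simp
  -- pointwise bound on g'
  have hbound : ∀ t ∈ Set.Icc 0 T, g' t ≤ cd * l t * kd * (c - g t) := by
    intro t ht
    have hln : 0 ≤ l t := hl t ht
    have h1 : inner ℝ (Xd t) (nv t) ≤ ‖Xd t‖ := by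
      calc inner ℝ (Xd t) (nv t) ≤ ‖Xd t‖ * ‖nv t‖ := real_inner_le_norm _ _
        _ ≤ ‖Xd t‖ * 1 := mul_le_mul_of_nonneg_left (hn t ht) (norm_nonneg _)
        _ = ‖Xd t‖ := mul_one _
    have h2 : ‖Xd t‖ ≤ (kd * ‖Xd t‖ ^ 2 + 1 / kd) / 2 := by
      have hexp : kd * (‖Xd t‖ - 1 / kd) ^ 2 = kd * ‖Xd t‖ ^ 2 - 2 * ‖Xd t‖ + 1 / kd := by
        field_simp
        ring
      nlinarith [mul_nonneg hkd.le (sq_nonneg (‖Xd t‖ - 1 / kd)), hexp]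
    have hXX : inner ℝ (Xd t) (Xd t) = ‖Xd t‖ ^ 2 := real_inner_self_eq_norm_sq _
    have hexpand : g' t
        = 2 * cd * l t * inner ℝ (Xd t) (nv t) - 2 * cd * l t * kd * ‖Xd t‖ ^ 2 := by
      simp [hg', inner_sub_right, inner_smul_right, hXX]
      ring
    have hstep : g' t ≤ 2 * cd * l t * ((kd * ‖Xd t‖ ^ 2 + 1 / kd) / 2)
        - 2 * cd * l t * kd * ‖Xd t‖ ^ 2 := by
      rw [hexpand]
      have : 2 * cd * l t * inner ℝ (Xd t) (nv t)
          ≤ 2 * cd * l t * ((kd * ‖Xd t‖ ^ 2 + 1 / kd) / 2) := by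
        apply mul_le_mul_of_nonneg_left (h1.trans h2)
        positivity
      linarith
    have heq : 2 * cd * l t * ((kd * ‖Xd t‖ ^ 2 + 1 / kd) / 2)
        - 2 * cd * l t * kd * ‖Xd t‖ ^ 2 = cd * l t * kd * (c - g t) := by
      rw [← hkc, hg]
      ring
    linarith [hstep, heq.le, heq.ge]
  have hcont : ContinuousOn g (Set.Icc 0 T) := fun t ht =>
    ((hgderiv t ht).continuousAt).continuousWithinAt
  have hg0 : g 0 ≤ c := by
    have : ‖Xd 0‖ ^ 2 ≤ (1 / kd) ^ 2 := by
      apply sq_le_sq' _ h0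
      linarith [norm_nonneg (Xd 0)]
    simpa [hg, hc, div_pow] using this
  have key : ∀ t ∈ Set.Icc 0 T, g t ≤ c := by
    intro t ht
    have hδ : ∀ δ > (0:ℝ), g t ≤ c + δ * (1 + t) := by
      intro δ hδ
      have := image_le_of_deriv_right_lt_deriv_boundary (f := g) (f' := g')
        (a := 0) (b := T) hcont
        (fun x hx => (hgderiv x (Ico_subset_Icc_self hx)).hasDerivWithinAt)
        (B := fun t => c + δ * (1 + t)) (B' := fun _ => δ)
        (by simpa using le_trans hg0 (by nlinarith))
        (fun x => by
          simpa using (((hasDerivAt_id x).const_add 1).const_mul δ).const_add c)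
        ?_ ht
      · exact this
      · intro x hx hgx
        have hgx' : g x = c + δ * (1 + x) := hgx
        have hx' : x ∈ Set.Icc 0 T := Ico_subset_Icc_self hx
        have h1 : g' x ≤ cd * l x * kd * (c - g x) := hbound x hx'
        have h2 : c - g x < 0 := by
          rw [hgx']; nlinarith [hx.1]
        have h3 : 0 ≤ cd * l x * kd := by
          have := hl x hx'
          positivity
        show g' x < δ
        nlinarith
    by_contra h
    push_neg at h
    have h1t : (0:ℝ) < 1 + t := by linarith [ht.1]
    have hlt : 0 < (g t - c) / (2 * (1 + t)) := by
      apply div_pos (by linarith) (by linarith)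
    have hle := hδ _ hlt
    have heq : (g t - c) / (2 * (1 + t)) * (1 + t) = (g t - c) / 2 := by
      field_simp
    rw [heq] at hle
    linarith
  intro t ht
  have hsq : ‖Xd t‖ ^ 2 ≤ (1 / kd) ^ 2 := by
    simpa [hc, div_pow, hg] using key t ht
  nlinarith [norm_nonneg (Xd t), hsq, one_div_pos.2 hkd]
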